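/- Let K ⊂ ℂ be a compact polynomially convex proper subset of the closed unit disk. Then there exists a Möbius transformation g of the unit disk (of the form g(z) = \bar{c}(z − tc)/(1 − t\bar{c}z) for some |c| = 1 and t ∈ (0,1)) such that g(K) ⊂ {z : |z| ≤ 1 and Re z ≤ 0}. -/

import Mathlib

open Complex Metric Set

/-- Lemma 2.2: a compact polynomially convex proper subset of the closed unit disk can be
moved by a Möbius transformation of the disk into the left half of the closed disk. -/
theorem moebius_moves_into_left_half_disk
    (K : Set ℂ) (hKc : IsCompact K) (hKsub : K ⊆ closedBall (0 : ℂ) 1)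
    (hKne : K ≠ closedBall (0 : ℂ) 1)
    (hpc : ∀ z ∉ K, ∃ p : Polynomial ℂ,
      ∀ w ∈ K, ‖p.eval w‖ < ‖p.eval z‖) :
    ∃ (c : ℂ) (t : ℝ), ‖c‖ = 1 ∧ t ∈ Set.Ioo (0 : ℝ) 1 ∧
      ∀ z ∈ K,
        ((starRingEnd ℂ) c * (z - t * c) / (1 - t * (starRingEnd ℂ) c * z)) ∈
          {w : ℂ | ‖w‖ ≤ 1 ∧ w.re ≤ 0} := by
  classical
  obtain ⟨c, hc1, hcK⟩ : ∃ c : ℂ, ‖c‖ = 1 ∧ c ∉ K := by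
    by_contra h
    push_neg at h
    obtain ⟨z0, hz0b, hz0K⟩ : ∃ z0 ∈ closedBall (0:ℂ) 1, z0 ∉ K := by
      rcases Set.exists_of_ssubset (hKsub.ssubset_of_ne hKne) with ⟨z0, hz0, hz0K⟩
      exact ⟨z0, hz0, hz0K⟩
    obtain ⟨p, hp⟩ := hpc z0 hz0K
    have hsc : IsCompact (sphere (0:ℂ) 1) := isCompact_sphere _ _
    obtain ⟨w, hw, hwmax⟩ := hsc.exists_isMaxOn ⟨1, by simp⟩
      ((continuous_norm.comp p.continuous).continuousOn)
    have hwK : w ∈ K := h w (by simpa [mem_sphere_zero_iff_norm] using hw)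
    have hmax : ‖p.eval z0‖ ≤ ‖p.eval w‖ := by
      apply Complex.norm_le_of_forall_mem_frontier_norm_le isBounded_ball
        p.differentiable.diffContOnCl
      · intro x hx
        rw [frontier_ball (0:ℂ) one_ne_zero] at hx
        simpa using hwmax hx
      · rwa [closure_ball (0:ℂ) one_ne_zero]
    exact absurd (lt_of_le_of_lt (by simpa using hmax) (hp w hwK))
      (lt_irrefl _)
  rcases Set.eq_empty_or_nonempty K with hKe | hKne'
  · exact ⟨1, 1/2, by simp, ⟨by norm_num, by norm_num⟩, by simp [hKe]⟩
  set δ := infDist c K with hδdef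
  have hδ : 0 < δ := by
    rw [← hKc.isClosed.notMem_iff_infDist_pos hKne'] at *
    exact hcK
  set s : ℝ := min δ 1 / 4 with hsdef
  have hs0 : 0 < s := by positivity
  have hsδ : s ≤ δ / 4 := by
    have : min δ 1 ≤ δ := min_le_left _ _
    simp only [hsdef]; linarith
  have hs1 : s ≤ 1/4 := by
    have : min δ 1 ≤ 1 := min_le_right _ _
    simp only [hsdef]; linarith
  refine ⟨c, 1 - s, hc1, ⟨by linarith, by linarith⟩, ?_⟩
  intro z hz
  set t : ℝ := 1 - s with htdef
  have ht0 : 0 < t := by simp only [htdef]; linarith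
  have ht1 : t < 1 := by simp only [htdef]; linarith
  have hcc : (starRingEnd ℂ) c * c = 1 := by
    have h1 : (starRingEnd ℂ) c * c = (Complex.normSq c : ℂ) := by
      rw [mul_comm]; exact Complex.mul_conj c
    rw [h1, Complex.normSq_eq_norm_sq, hc1]; norm_num
  set w : ℂ := (starRingEnd ℂ) c * z with hwdef
  have habsw : ‖w‖ ≤ 1 := by
    have hz1 : ‖z‖ ≤ 1 := by
      simpa using mem_closedBall_zero_iff.mp (hKsub hz)
    calc ‖w‖ = ‖(starRingEnd ℂ) c‖ * ‖z‖ := norm_mul _ _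
      _ = ‖z‖ := by rw [Complex.norm_conj, hc1, one_mul]
      _ ≤ 1 := hz1
  have hdist : δ ≤ ‖w - 1‖ := by
    have h1 : w - 1 = (starRingEnd ℂ) c * (z - c) := by
      rw [hwdef, mul_sub, hcc]
    have h2 : ‖w - 1‖ = ‖z - c‖ := by
      rw [h1, norm_mul, Complex.norm_conj, hc1, one_mul]
    rw [h2]
    calc δ ≤ dist c z := infDist_le_dist_of_mem hz
      _ = ‖z - c‖ := by rw [dist_comm, Complex.dist_eq]
  have hnum : (starRingEnd ℂ) c * (z - (t:ℂ) * c) = w - t := by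
    rw [mul_sub, show (starRingEnd ℂ) c * ((t:ℂ) * c) = (t:ℂ) * ((starRingEnd ℂ) c * c) from by
      ring, hcc, mul_one, hwdef]
  have hden : (1 : ℂ) - (t:ℂ) * (starRingEnd ℂ) c * z = 1 - t * w := by
    rw [hwdef, mul_assoc]
  -- lower bound on the denominator
  have hdlow : δ - s ≤ ‖1 - (t:ℂ) * w‖ := by
    have e1 : (1:ℂ) - w = (1 - (t:ℂ)*w) - ((1 - t : ℝ):ℂ) * w := by
      push_cast; ring
    have e2 : ‖1 - w‖ ≤ ‖1 - (t:ℂ)*w‖ + ‖((1 - t : ℝ):ℂ) * w‖ := by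
      rw [e1]; exact norm_sub_le _ _
    have e3 : ‖((1 - t : ℝ):ℂ) * w‖ ≤ s := by
      rw [norm_mul, Complex.norm_real, Real.norm_eq_abs]
      have : |1 - t| = s := by rw [htdef]; simp [_root_.abs_of_nonneg hs0.le]
      rw [this]
      nlinarith [norm_nonneg w]
    have e4 : ‖1 - w‖ = ‖w - 1‖ := by
      exact (norm_sub_rev 1 w)
    nlinarith [hdist]
  have hdpos : 0 < ‖1 - (t:ℂ) * w‖ := by
    have : 3 * s ≤ δ - s := by linarith
    linarith
  have hdne : (1 : ℂ) - (t:ℂ) * w ≠ 0 := by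
    intro h0; rw [h0] at hdpos; simp at hdpos
  rw [hnum, hden]
  constructor
  · -- modulus bound
    show ‖(w - (t:ℂ)) / (1 - (t:ℂ) * w)‖ ≤ 1
    rw [norm_div, div_le_one hdpos]
    have hsq : Complex.normSq (w - (t:ℂ)) ≤ Complex.normSq (1 - (t:ℂ) * w) := by
      have hw2 : w.re ^ 2 + w.im ^ 2 ≤ 1 := by
        have := Complex.sq_norm w
        nlinarith [norm_nonneg w, Complex.normSq_apply w]
      have ht2 : t ^ 2 ≤ 1 := by nlinarith
      simp only [Complex.normSq_apply, Complex.sub_re, Complex.sub_im, Complex.mul_re,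
        Complex.mul_im, Complex.one_re, Complex.one_im, Complex.ofReal_re, Complex.ofReal_im]
      nlinarith [mul_nonneg (by linarith : (0:ℝ) ≤ 1 - t^2) (by linarith : (0:ℝ) ≤ 1 - (w.re^2 + w.im^2))]
    have := Real.sqrt_le_sqrt hsq
    simpa [Complex.norm_def] using this
  · -- real part bound
    show ((w - (t:ℂ)) / (1 - (t:ℂ) * w)).re ≤ 0
    set g : ℂ := (w - (t:ℂ)) / (1 - (t:ℂ) * w) with hgdef
    have hg1 : g + 1 = ((1 - t : ℝ):ℂ) * (1 + w) / (1 - (t:ℂ) * w) := by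
      rw [hgdef]
      rw [div_add_one hdne, div_left_inj' hdne]
      -- (cast already normalized)
      push_cast; ring
    have hab : ‖g + 1‖ ≤ 1 := by
      rw [hg1, norm_div, norm_mul, Complex.norm_real, Real.norm_eq_abs]
      rw [div_le_one hdpos]
      have h1w : ‖1 + w‖ ≤ 2 := by
        calc ‖1 + w‖ ≤ ‖(1:ℂ)‖ + ‖w‖ := norm_add_le _ _
          _ ≤ 2 := by rw [norm_one]; linarith
      have habs1t : |1 - t| = s := by rw [htdef]; simp [_root_.abs_of_nonneg hs0.le]
      rw [habs1t]
      have : s * ‖1 + w‖ ≤ 2 * s := by nlinarith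
      nlinarith
    have : g.re + 1 ≤ 1 := by
      have h1 := Complex.re_le_norm (g + 1)
      simpa using h1.trans hab
    linarith
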